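/- arXiv:2306.04189 — 2 statements merged into one kernel-verified Lean document; each statement's English description precedes it below -/
import Mathlib

section
/- Let D be a finite set with |D| = n. The number of pairs (S, F), where S ⊆ D and F ⊆ D × D, such that for all x, y ∈ D, if x ∈ S and (x, y) ∈ F then y ∈ S, equals Σ_{k=0}^{n} C(n,k) · 2^{n² − k(n−k)}. (This is the model count of the 'friends and smokers' sentence ∀ X, Y ∈ Δ. smokes(X) ∧ friends(X,Y) ⇒ smokes(Y) over a domain of size n.) -/
/-- The model count of the `friends and smokers` sentence
`∀ X, Y ∈ Δ. smokes(X) ∧ friends(X,Y) ⇒ smokes(Y)` over a domain of size `n`. -/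
theorem count_friends_smokers {α : Type*} [DecidableEq α]
    (D : Finset α) (n : ℕ) (hD : D.card = n) :
    ((D.powerset ×ˢ (D ×ˢ D).powerset).filter
        (fun SF => ∀ x ∈ D, ∀ y ∈ D, x ∈ SF.1 → (x, y) ∈ SF.2 → y ∈ SF.1)).card
      = ∑ k ∈ Finset.range (n + 1), n.choose k * 2 ^ (n ^ 2 - k * (n - k)) := by
  classical
  have key : ((D.powerset ×ˢ (D ×ˢ D).powerset).filter
        (fun SF => ∀ x ∈ D, ∀ y ∈ D, x ∈ SF.1 → (x, y) ∈ SF.2 → y ∈ SF.1))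
      = D.powerset.biUnion (fun S =>
          ((D ×ˢ D) \ (S ×ˢ (D \ S))).powerset.image (fun F => (S, F))) := by
    ext ⟨S, F⟩
    simp only [Finset.mem_filter, Finset.mem_product, Finset.mem_powerset,
      Finset.mem_biUnion, Finset.mem_image, Prod.mk.injEq]
    constructor
    · rintro ⟨⟨hS, hF⟩, hcond⟩
      refine ⟨S, hS, F, ?_, rfl, rfl⟩
      intro p hp
      obtain ⟨x, y⟩ := p
      have hxy := hF hp
      rw [Finset.mem_product] at hxy
      rw [Finset.mem_sdiff]
      refine ⟨hF hp, ?_⟩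
      rw [Finset.mem_product, Finset.mem_sdiff]
      rintro ⟨hxS, hyD, hyS⟩
      exact hyS (hcond x hxy.1 y hxy.2 hxS hp)
    · rintro ⟨S', hS', F', hF', rfl, rfl⟩
      have hFsub : F' ⊆ D ×ˢ D := hF'.trans (Finset.sdiff_subset)
      refine ⟨⟨hS', hFsub⟩, ?_⟩
      intro x hx y hy hxS hxyF
      have := hF' hxyF
      simp only [Finset.mem_sdiff, Finset.mem_product, not_and, not_not] at this
      exact this.2 hxS hy
  rw [key, Finset.card_biUnion]
  · have hterm : ∀ S ∈ D.powerset,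
        (((D ×ˢ D) \ (S ×ˢ (D \ S))).powerset.image (fun F => (S, F))).card
          = 2 ^ (n ^ 2 - S.card * (n - S.card)) := by
      intro S hS
      rw [Finset.mem_powerset] at hS
      rw [Finset.card_image_of_injective _ (fun a b h => by simpa using h),
        Finset.card_powerset, Finset.card_sdiff_of_subset
          (Finset.product_subset_product hS Finset.sdiff_subset),
        Finset.card_product, Finset.card_product, Finset.card_sdiff_of_subset hS, hD, sq]
    rw [Finset.sum_congr rfl hterm, Finset.sum_powerset _ (fun t => 2 ^ (n ^ 2 - t.card * (n - t.card))),
      hD]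
    refine Finset.sum_congr rfl fun k _ => ?_
    rw [Finset.sum_powersetCard k D (fun j => 2 ^ (n ^ 2 - j * (n - j))), hD, smul_eq_mul]
  · intro S hS S' hS' hne
    simp only [Finset.disjoint_left, Finset.mem_image]
    rintro ⟨a, b⟩ ⟨F, hF, h1⟩ ⟨F', hF', h2⟩
    cases h1; cases h2
    exact hne rfl
end

section
/- For every natural number m ≥ 0, m! = Σ_{l=0}^{m} C(m,l) · (−1)^{m−l} · PI(m, l) (as an identity in the integers), where PI(m, l) is the number of partial injections from a set of size m to a set of size l. (The left-hand side is the number of injective endofunctions on a set of size m, which are exactly the permutations.) -/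
/-- `PI m n` is the number of partial injections from a set of size `m`
to a set of size `n`. -/
def PI (m n : ℕ) : ℕ :=
  Fintype.card {R : Finset (Fin m × Fin n) //
    (∀ x y z, (x, y) ∈ R → (x, z) ∈ R → y = z) ∧
    (∀ x z y, (x, y) ∈ R → (z, y) ∈ R → x = z)}

section aux

variable {m n : ℕ}

private def graph (S : Finset (Fin m)) (f : S ↪ Fin n) : Finset (Fin m × Fin n) :=
  S.attach.image (fun x => (x.1, f x))

private lemma mem_graph {S : Finset (Fin m)} {f : S ↪ Fin n} {a : Fin m} {b : Fin n} :
    (a, b) ∈ graph S f ↔ ∃ h : a ∈ S, f ⟨a, h⟩ = b := by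
  simp only [graph, Finset.mem_image, Finset.mem_attach, true_and, Prod.ext_iff]
  constructor
  · rintro ⟨⟨x, hx⟩, h1, h2⟩
    subst h1
    exact ⟨hx, h2⟩
  · rintro ⟨h, hf⟩
    exact ⟨⟨a, h⟩, rfl, hf⟩

private noncomputable def piEquiv :
    (Σ S : Finset (Fin m), (S ↪ Fin n)) ≃
      {R : Finset (Fin m × Fin n) //
        (∀ x y z, (x, y) ∈ R → (x, z) ∈ R → y = z) ∧
        (∀ x z y, (x, y) ∈ R → (z, y) ∈ R → x = z)} := by
  refine Equiv.ofBijective (fun p => ⟨graph p.1 p.2, ?_, ?_⟩) ⟨?_, ?_⟩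
  · rintro x y z hy hz
    obtain ⟨h1, rfl⟩ := mem_graph.mp hy
    obtain ⟨h2, rfl⟩ := mem_graph.mp hz
    rfl
  · rintro x z y hx hz
    obtain ⟨h1, e1⟩ := mem_graph.mp hx
    obtain ⟨h2, e2⟩ := mem_graph.mp hz
    have := p.2.injective (e1.trans e2.symm)
    exact congrArg Subtype.val this
  · rintro ⟨S, f⟩ ⟨T, g⟩ h
    simp only [Subtype.mk_eq_mk] at h
    have hST : S = T := by
      ext a
      constructor
      · intro ha
        obtain ⟨hb, _⟩ := mem_graph.mp (h ▸ mem_graph.mpr ⟨ha, rfl⟩)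
        exact hb
      · intro ha
        obtain ⟨hb, _⟩ := mem_graph.mp (h ▸ mem_graph.mpr ⟨ha, rfl⟩ : (a, g ⟨a, ha⟩) ∈ graph S f)
        exact hb
    subst hST
    have hfg : f = g := by
      ext ⟨a, ha⟩
      obtain ⟨hb, e⟩ := mem_graph.mp (h ▸ mem_graph.mpr ⟨ha, rfl⟩ : (a, f ⟨a, ha⟩) ∈ graph S g)
      exact congrArg Fin.val e.symm
    simp [hfg]
  · rintro ⟨R, h1, h2⟩
    classical
    set S : Finset (Fin m) := R.image Prod.fst with hS
    have hex : ∀ x : {a // a ∈ S}, ∃ b, (x.1, b) ∈ R := by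
      rintro ⟨a, ha⟩
      obtain ⟨⟨a', b⟩, hp, rfl⟩ := Finset.mem_image.mp ha
      exact ⟨b, hp⟩
    have hinj : Function.Injective (fun x : {a // a ∈ S} => (hex x).choose) := by
      intro x y hxy
      have hx := (hex x).choose_spec
      have hy := (hex y).choose_spec
      rw [show (hex x).choose = (hex y).choose from hxy] at hx
      exact Subtype.ext (h2 _ _ _ hx hy)
    refine ⟨⟨S, ⟨fun x => (hex x).choose, hinj⟩⟩, ?_⟩
    simp only [Subtype.mk_eq_mk]
    ext ⟨a, b⟩
    rw [mem_graph]
    constructor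
    · rintro ⟨h, rfl⟩
      exact (hex ⟨a, h⟩).choose_spec
    · intro hab
      have ha : a ∈ S := Finset.mem_image.mpr ⟨(a, b), hab, rfl⟩
      exact ⟨ha, h1 _ _ _ (hex ⟨a, ha⟩).choose_spec hab⟩

private lemma PI_eq (m n : ℕ) :
    PI m n = ∑ k ∈ Finset.range (m + 1), m.choose k * n.descFactorial k := by
  classical
  rw [PI, ← Fintype.card_congr (piEquiv (m := m) (n := n)), Fintype.card_sigma]
  have : ∀ S : Finset (Fin m), Fintype.card (S ↪ Fin n) = n.descFactorial S.card := by
    intro S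
    rw [Fintype.card_embedding_eq, Fintype.card_coe, Fintype.card_fin]
  simp_rw [this]
  rw [← Finset.powerset_univ, Finset.sum_powerset_apply_card (fun k => n.descFactorial k)]
  simp [Finset.card_univ]


private lemma alt_sum (m k : ℕ) (hk : k ≤ m) :
    ∑ l ∈ Finset.range (m + 1), (m.choose l : ℤ) * (-1) ^ (m - l) * (l.choose k : ℤ)
      = if k = m then 1 else 0 := by
  rw [Finset.range_eq_Ico, ← Finset.sum_Ico_consecutive _ (Nat.zero_le k) (by omega : k ≤ m + 1)]
  have h0 : ∑ l ∈ Finset.Ico 0 k, (m.choose l : ℤ) * (-1) ^ (m - l) * (l.choose k : ℤ) = 0 := by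
    refine Finset.sum_eq_zero fun l hl => ?_
    rw [Nat.choose_eq_zero_of_lt (Finset.mem_Ico.mp hl).2]
    simp
  rw [h0, zero_add, Finset.sum_Ico_eq_sum_range]
  have hmk : m + 1 - k = (m - k) + 1 := by omega
  rw [hmk]
  set d := m - k with hd
  have step : ∀ j ∈ Finset.range (d + 1),
      (m.choose (k + j) : ℤ) * (-1) ^ (m - (k + j)) * ((k + j).choose k : ℤ)
        = (m.choose k : ℤ) * ((-1) ^ (d - j) * (d.choose j : ℤ)) := by
    intro j hj
    have hj' : j ≤ d := by simpa [Nat.lt_succ_iff] using hj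
    have h1 : m.choose (k + j) * (k + j).choose k = m.choose k * d.choose j := by
      rw [Nat.choose_mul (by omega : k ≤ k + j)]
      congr 2 <;> omega
    have h2 : m - (k + j) = d - j := by omega
    calc (m.choose (k + j) : ℤ) * (-1) ^ (m - (k + j)) * ((k + j).choose k : ℤ)
        = ((m.choose (k + j) * (k + j).choose k : ℕ) : ℤ) * (-1) ^ (d - j) := by
          rw [h2]; push_cast; ring
      _ = (m.choose k : ℤ) * ((-1) ^ (d - j) * (d.choose j : ℤ)) := by
          rw [h1]; push_cast; ring
  rw [Finset.sum_congr rfl step, ← Finset.mul_sum]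
  have hrefl : ∑ j ∈ Finset.range (d + 1), (-1 : ℤ) ^ (d - j) * (d.choose j : ℤ)
      = ∑ j ∈ Finset.range (d + 1), (-1 : ℤ) ^ j * (d.choose j : ℤ) := by
    rw [← Finset.sum_range_reflect]
    refine Finset.sum_congr rfl fun j hj => ?_
    have hj' : j ≤ d := by simpa [Nat.lt_succ_iff] using hj
    rw [show d + 1 - 1 - j = d - j by omega, show d - (d - j) = j by omega,
      Nat.choose_symm hj']
  rw [hrefl, Int.alternating_sum_range_choose]
  rcases eq_or_ne d 0 with h | h
  · have : k = m := by omega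
    simp [this, h, Nat.choose_self]
  · have : k ≠ m := by omega
    simp [this, h]

end aux

/-- The number of injective endofunctions (permutations) on a set of size `m`
is `m!`, expressed via Crane's solution using partial injection counts
(identity in the integers). -/
theorem injective_endofunction_count (m : ℕ) :
    (m.factorial : ℤ) =
      ∑ l ∈ Finset.range (m + 1), (m.choose l : ℤ) * (-1) ^ (m - l) * PI m l := by
  simp_rw [PI_eq, Nat.descFactorial_eq_factorial_mul_choose, Nat.cast_sum, Nat.cast_mul,
    Finset.mul_sum]
  rw [Finset.sum_comm]
  have key : ∀ k ∈ Finset.range (m + 1),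
      (∑ l ∈ Finset.range (m + 1),
        (m.choose l : ℤ) * (-1) ^ (m - l) * ((m.choose k : ℤ) * ((k.factorial : ℤ) * (l.choose k : ℤ)))) =
      if k = m then (m.factorial : ℤ) else 0 := by
    intro k hk
    rw [Finset.mem_range, Nat.lt_succ_iff] at hk
    have h1 : ∀ l ∈ Finset.range (m + 1),
        (m.choose l : ℤ) * (-1) ^ (m - l) * ((m.choose k : ℤ) * ((k.factorial : ℤ) * (l.choose k : ℤ)))
          = ((m.choose k : ℤ) * (k.factorial : ℤ)) *
            ((m.choose l : ℤ) * (-1) ^ (m - l) * (l.choose k : ℤ)) := fun l _ => by ring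
    rw [Finset.sum_congr rfl h1, ← Finset.mul_sum, alt_sum m k hk]
    rcases eq_or_ne k m with rfl | h
    · simp [Nat.choose_self]
    · simp [h]
  rw [Finset.sum_congr rfl key]
  simp
end
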